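/- Let A be a band-dominated bounded linear operator on ℓ²(ℤ) that is lower triangular and invertible, and suppose that its inverse A⁻¹ is also lower triangular. Then Q A Q + (I − Q) is Fredholm with index 0, i.e. ind₊(A) = 0. -/

import Mathlib

noncomputable section

/-- `ℓ²(ℤ)`, the Hilbert space of square-summable complex sequences indexed by `ℤ`. -/
abbrev H : Type := lp (fun _ : ℤ => ℂ) 2

/-- The matrix entry `a_{ij} = ⟨e_i, A e_j⟩` of a bounded operator on `ℓ²(ℤ)`. -/
def entry (A : H →L[ℂ] H) (i j : ℤ) : ℂ := A (lp.single 2 j 1) i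

/-- A band operator: all entries vanish outside a band `|i − j| ≤ w`. -/
def IsBandOperator (A : H →L[ℂ] H) : Prop :=
  ∃ w : ℕ, ∀ i j : ℤ, (w : ℤ) < |i - j| → entry A i j = 0

/-- A band-dominated operator: a norm limit of band operators. -/
def IsBandDominated (A : H →L[ℂ] H) : Prop :=
  ∀ ε : ℝ, 0 < ε → ∃ B : H →L[ℂ] H, IsBandOperator B ∧ ‖A - B‖ < ε

/-- A bounded operator on a Hilbert space is Fredholm if its kernel is finite-dimensional
and its range is closed and of finite codimension. -/
def IsFredholm (T : H →L[ℂ] H) : Prop :=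
  FiniteDimensional ℂ (LinearMap.ker (T : H →ₗ[ℂ] H)) ∧
  IsClosed (LinearMap.range (T : H →ₗ[ℂ] H) : Set H) ∧
  FiniteDimensional ℂ (H ⧸ LinearMap.range (T : H →ₗ[ℂ] H))

/-- The Fredholm index `ind(T) = dim ker T − dim coker T`. -/
def fredholmIndex (T : H →L[ℂ] H) : ℤ :=
  (Module.finrank ℂ (LinearMap.ker (T : H →ₗ[ℂ] H)) : ℤ) -
  (Module.finrank ℂ (H ⧸ LinearMap.range (T : H →ₗ[ℂ] H)) : ℤ)

/-- A lower triangular operator: `a_{ij} = 0` whenever `j > i`. -/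
def IsLowerTriangular (A : H →L[ℂ] H) : Prop := ∀ i j : ℤ, i < j → entry A i j = 0

/-- Two continuous linear maps on `H` agreeing on all `lp.single`s are equal. -/
lemma ext_of_single (T S : H →L[ℂ] H)
    (h : ∀ (j : ℤ) (a : ℂ), T (lp.single 2 j a) = S (lp.single 2 j a)) : T = S := by
  refine ContinuousLinearMap.ext fun f => ?_
  haveI : Fact ((1 : ENNReal) ≤ 2) := ⟨by norm_num⟩
  have h1 : HasSum (fun i : ℤ => lp.single 2 i (f i)) f :=
    lp.hasSum_single (by norm_num) f
  have hT : HasSum (fun i : ℤ => T (lp.single 2 i (f i))) (T f) := h1.mapL T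
  have hS : HasSum (fun i : ℤ => S (lp.single 2 i (f i))) (S f) := h1.mapL S
  have : (fun i : ℤ => T (lp.single 2 i (f i))) = fun i : ℤ => S (lp.single 2 i (f i)) := by
    funext i; exact h i (f i)
  rw [this] at hT
  exact hT.unique hS

/-- Key ring computation. -/
lemma ring_key {R : Type*} [Ring R] (Q A B : R) (hQ : Q * Q = Q)
    (hB : Q * (B * Q) = B * Q) (h : A * B = 1) :
    (Q * (A * Q) + (1 - Q)) * (Q * (B * Q) + (1 - Q)) = 1 := by
  have h1 : Q * (A * Q) * (Q * (B * Q)) = Q := by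
    rw [hB, mul_assoc Q (A * Q) (B * Q), mul_assoc A Q (B * Q), hB, ← mul_assoc A B Q, h,
      one_mul, hQ]
  have h2 : Q * (A * Q) * (1 - Q) = 0 := by
    rw [mul_sub, mul_one, mul_assoc Q (A * Q) Q, mul_assoc A Q Q, hQ, sub_self]
  have h3 : (1 - Q) * (Q * (B * Q)) = 0 := by
    rw [sub_mul, one_mul, ← mul_assoc Q Q (B * Q), hQ, sub_self]
  have h4 : (1 - Q) * (1 - Q) = 1 - Q := by
    rw [sub_mul, one_mul, mul_sub, mul_one, hQ, sub_self, sub_zero]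
  rw [add_mul, mul_add, mul_add, h1, h2, h3, h4]
  abel

/-- **Corollary 2.** A band-dominated, lower triangular, invertible
operator `A` on `ℓ²(ℤ)` whose inverse is also lower triangular has plus-index zero:
`Q A Q + (I − Q)` is Fredholm with index `0`. -/
theorem lower_triangular_with_lower_triangular_inverse_plus_index_zero
    (A A' : H →L[ℂ] H)
    (hbd : IsBandDominated A) (hLT : IsLowerTriangular A)
    (hinv₁ : A' ∘L A = 1) (hinv₂ : A ∘L A' = 1)
    (hLT' : IsLowerTriangular A')
    (Q : H →L[ℂ] H)
    (hQ : ∀ (x : H) (i : ℤ), Q x i = if 1 ≤ i then x i else 0) :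
    IsFredholm (Q ∘L A ∘L Q + (1 - Q)) ∧
    fredholmIndex (Q ∘L A ∘L Q + (1 - Q)) = 0 := by
  -- Q is idempotent
  have hQQ : Q * Q = Q := by
    refine ContinuousLinearMap.ext fun x => lp.ext (funext fun i => ?_)
    show Q (Q x) i = Q x i
    rw [hQ (Q x) i, hQ x i]
    by_cases hi : 1 ≤ i <;> simp [hi, hQ x i]
  -- Q acting on singles
  have hQsingle : ∀ (j : ℤ) (a : ℂ), Q (lp.single 2 j a) =
      if 1 ≤ j then lp.single 2 j a else 0 := by
    intro j a
    refine lp.ext (funext fun i => ?_)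
    by_cases hj : 1 ≤ j
    · simp only [hj, if_true]
      rw [hQ]
      by_cases hi : 1 ≤ i
      · simp [hi]
      · simp only [hi, if_false]
        have hij : i ≠ j := by omega
        rw [lp.single_apply, Pi.single_apply, if_neg hij]
    · simp only [hj, if_false]
      rw [hQ]
      by_cases hi : 1 ≤ i
      · simp only [hi, if_true]
        have hij : i ≠ j := by omega
        rw [lp.single_apply, Pi.single_apply, if_neg hij]
        simp
      · simp [hi]
  -- lower triangularity: entries of B (single j a) vanish below row 1 when j ≥ 1
  have hlow : ∀ (B : H →L[ℂ] H), IsLowerTriangular B → ∀ (j : ℤ), 1 ≤ j → ∀ (a : ℂ)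
      (i : ℤ), i < 1 → B (lp.single 2 j a) i = 0 := by
    intro B hB j hj a i hi
    have hsm : (lp.single 2 j a : H) = a • (lp.single 2 j (1 : ℂ) : H) := by
      have := lp.single_smul (E := fun _ : ℤ => ℂ) 2 j a (1 : ℂ)
      rw [smul_eq_mul, mul_one] at this
      exact this
    rw [hsm, map_smul]
    have : B (lp.single 2 j (1 : ℂ)) i = 0 := hB i j (by omega)
    show a • (B (lp.single 2 j (1 : ℂ)) i) = 0
    rw [this, smul_zero]
  -- Q ∘ B ∘ Q = B ∘ Q for lower triangular B
  have hkey : ∀ (B : H →L[ℂ] H), IsLowerTriangular B → Q * (B * Q) = B * Q := by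
    intro B hB
    apply ext_of_single
    intro j a
    show Q (B (Q (lp.single 2 j a))) = B (Q (lp.single 2 j a))
    rw [hQsingle]
    by_cases hj : 1 ≤ j
    · simp only [hj, if_true]
      refine lp.ext (funext fun i => ?_)
      rw [hQ]
      by_cases hi : 1 ≤ i
      · simp [hi]
      · simp only [hi, if_false]
        exact (hlow B hB j hj a i (by omega)).symm
    · simp [hj]
  have hA : Q * (A * Q) = A * Q := hkey A hLT
  have hA' : Q * (A' * Q) = A' * Q := hkey A' hLT'
  have hAA' : A * A' = 1 := hinv₂
  have hA'A : A' * A = 1 := hinv₁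
  set T : H →L[ℂ] H := Q ∘L A ∘L Q + (1 - Q) with hT
  set S : H →L[ℂ] H := Q * (A' * Q) + (1 - Q) with hS
  have hTeq : T = Q * (A * Q) + (1 - Q) := rfl
  have hTS : T * S = 1 := by rw [hTeq, hS]; exact ring_key Q A A' hQQ hA' hAA'
  have hST : S * T = 1 := by rw [hTeq, hS]; exact ring_key Q A' A hQQ hA hA'A
  -- T is injective and surjective
  have hinj : Function.Injective T := by
    intro x y hxy
    have : S (T x) = S (T y) := by rw [hxy]
    rwa [show ∀ z : H, S (T z) = z from fun z => by
      rw [← ContinuousLinearMap.comp_apply, ← ContinuousLinearMap.mul_def, hST,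
        ContinuousLinearMap.one_apply], show ∀ z : H, S (T z) = z from fun z => by
      rw [← ContinuousLinearMap.comp_apply, ← ContinuousLinearMap.mul_def, hST,
        ContinuousLinearMap.one_apply]] at this
  have hsurj : Function.Surjective T := by
    intro y
    refine ⟨S y, ?_⟩
    rw [← ContinuousLinearMap.comp_apply, ← ContinuousLinearMap.mul_def, hTS,
      ContinuousLinearMap.one_apply]
  have hker : LinearMap.ker (T : H →ₗ[ℂ] H) = ⊥ := (LinearMap.ker_eq_bot (f := (T : H →ₗ[ℂ] H))).mpr hinj
  have hrange : LinearMap.range (T : H →ₗ[ℂ] H) = ⊤ := (LinearMap.range_eq_top (f := (T : H →ₗ[ℂ] H))).mpr hsurj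
  have hfd1 : FiniteDimensional ℂ (LinearMap.ker (T : H →ₗ[ℂ] H)) := by
    rw [hker]; infer_instance
  have hsub : Subsingleton (H ⧸ LinearMap.range (T : H →ₗ[ℂ] H)) := by
    rw [hrange]; exact Submodule.Quotient.subsingleton_iff.mpr rfl
  have hfd2 : FiniteDimensional ℂ (H ⧸ LinearMap.range (T : H →ₗ[ℂ] H)) := by
    haveI := hsub; infer_instance
  refine ⟨⟨hfd1, ?_, hfd2⟩, ?_⟩
  · rw [hrange]
    show IsClosed ((⊤ : Submodule ℂ H) : Set H)
    rw [Submodule.top_coe]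
    exact isClosed_univ
  · unfold fredholmIndex
    haveI := hsub
    rw [hker]
    rw [finrank_bot ℂ H, Module.finrank_zero_of_subsingleton]
    simp
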